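/- The complete tripartite graph with three parts each of size m (so n = 3m vertices and n²/3 edges) has no chordal subgraph with more than 2n-3 edges. -/

import Mathlib

/-- A graph is chordal if every cycle of length at least 4 has a chord: an edge of the
graph between two vertices of the cycle that is not an edge of the cycle. -/
def IsChordal {V : Type*} (G : SimpleGraph V) : Prop :=
  ∀ (v : V) (w : G.Walk v v), w.IsCycle → 4 ≤ w.length →
    ∃ a b, a ∈ w.support ∧ b ∈ w.support ∧ G.Adj a b ∧ s(a, b) ∉ w.edges

open SimpleGraph

namespace ChordalBoundAux

set_option linter.unusedSectionVars false

section Walks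

variable {V : Type*} [DecidableEq V] {G : SimpleGraph V} {x y u v : V}

lemma edge_mem_of_length_one {w : G.Walk u v} (h : w.length = 1) : s(u, v) ∈ w.edges := by
  cases w with
  | nil => simp at h
  | cons hadj w' =>
    rw [Walk.length_cons] at h
    have h0 : w'.length = 0 := by omega
    have := Walk.eq_of_length_eq_zero h0
    subst this
    simp

lemma mem_dropUntil_or (p : G.Walk x y) (hu : u ∈ p.support) (hv : v ∈ p.support) :
    v ∈ (p.dropUntil u hu).support ∨ u ∈ (p.dropUntil v hv).support := by
  induction p with
  | nil =>
    rw [Walk.mem_support_nil_iff] at hu hv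
    subst hu; subst hv
    left
    exact Walk.start_mem_support _
  | @cons a c d hadj p' ih =>
    by_cases hua : a = u
    · subst hua
      left
      simp only [Walk.dropUntil, dif_pos rfl]
      exact hv
    · by_cases hva : a = v
      · subst hva
        right
        simp only [Walk.dropUntil, dif_pos rfl]
        exact hu
      · have hu' : u ∈ p'.support := by
          rw [Walk.support_cons, List.mem_cons] at hu
          exact hu.resolve_left (fun h => hua h.symm)
        have hv' : v ∈ p'.support := by
          rw [Walk.support_cons, List.mem_cons] at hv
          exact hv.resolve_left (fun h => hva h.symm)
        have e1 : (Walk.cons hadj p').dropUntil u hu = p'.dropUntil u hu' := by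
          simp only [Walk.dropUntil, dif_neg hua]
        have e2 : (Walk.cons hadj p').dropUntil v hv = p'.dropUntil v hv' := by
          simp only [Walk.dropUntil, dif_neg hva]
        rw [e1, e2]
        exact ih hu' hv'

lemma shortcut_core {p : G.Walk x y} (hu : u ∈ p.support)
    (hv : v ∈ (p.dropUntil u hu).support) (hadj : G.Adj u v) (hne : s(u, v) ∉ p.edges) :
    ∃ q : G.Walk x y, q.length < p.length ∧ ∀ a ∈ q.support, a ∈ p.support := by
  set r := p.dropUntil u hu with hr
  refine ⟨(p.takeUntil u hu).append (Walk.cons hadj (r.dropUntil v hv)), ?_, ?_⟩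
  · have hlenp : p.length = (p.takeUntil u hu).length + r.length := by
      conv_lhs => rw [← p.take_spec hu]
      rw [Walk.length_append]
    have hlenr : r.length = (r.takeUntil v hv).length + (r.dropUntil v hv).length := by
      conv_lhs => rw [← r.take_spec hv]
      rw [Walk.length_append]
    have h2 : 2 ≤ (r.takeUntil v hv).length := by
      rcases Nat.lt_or_ge (r.takeUntil v hv).length 2 with hlt | hge
      · interval_cases h : (r.takeUntil v hv).length
        · exact absurd (Walk.eq_of_length_eq_zero h) hadj.ne
        · exact absurd ((Walk.edges_dropUntil_subset p hu)
            ((Walk.edges_takeUntil_subset r hv) (edge_mem_of_length_one h))) hne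
      · exact hge
    rw [hlenp, hlenr, Walk.length_append, Walk.length_cons]
    omega
  · intro a ha
    rw [Walk.mem_support_append_iff] at ha
    rcases ha with ha | ha
    · exact Walk.support_takeUntil_subset p hu ha
    · rw [Walk.support_cons, List.mem_cons] at ha
      rcases ha with rfl | ha
      · exact hu
      · exact Walk.support_dropUntil_subset p hu
          (Walk.support_dropUntil_subset r hv ha)

lemma no_shortcut {T : Set V} {p : G.Walk x y}
    (hmin : ∀ q : G.Walk x y, (∀ a ∈ q.support, a ∈ T) → p.length ≤ q.length)
    (hsupp : ∀ a ∈ p.support, a ∈ T)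
    (hu : u ∈ p.support) (hv : v ∈ p.support) (hadj : G.Adj u v)
    (hne : s(u, v) ∉ p.edges) : False := by
  rcases mem_dropUntil_or p hu hv with h | h
  · obtain ⟨q, hq1, hq2⟩ := shortcut_core hu h hadj hne
    exact absurd (hmin q (fun a ha => hsupp a (hq2 a ha))) (by omega)
  · obtain ⟨q, hq1, hq2⟩ := shortcut_core hv h hadj.symm (by rwa [Sym2.eq_swap])
    exact absurd (hmin q (fun a ha => hsupp a (hq2 a ha))) (by omega)


end Walks

section Cycle

variable {V : Type*} {G : SimpleGraph V} {x y : V}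

lemma isCycle_append {pA : G.Walk x y} (hA : pA.IsPath) {pB : G.Walk y x} (hB : pB.IsPath)
    (hnadj : ¬ G.Adj x y) (hlenA : 2 ≤ pA.length)
    (hAB : ∀ a, a ∈ pA.support → a ∈ pB.support → a = x ∨ a = y) :
    (pA.append pB).IsCycle := by
  have hxtail : x ∉ pA.support.tail := by
    have := hA.support_nodup
    rw [pA.support_eq_cons] at this
    exact (List.nodup_cons.mp this).1
  have hytail : y ∉ pB.support.tail := by
    have := hB.support_nodup
    rw [pB.support_eq_cons] at this
    exact (List.nodup_cons.mp this).1
  constructor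
  · constructor
    · constructor
      rw [Walk.edges_append]
      rw [List.nodup_append]
      refine ⟨hA.isTrail.edges_nodup, hB.isTrail.edges_nodup, ?_⟩
      intro e heA e' heB heq
      rw [← heq] at heB
      induction e with
      | h a b =>
        have ha := hAB a (pA.fst_mem_support_of_mem_edges heA)
          (pB.fst_mem_support_of_mem_edges heB)
        have hb := hAB b (pA.snd_mem_support_of_mem_edges heA)
          (pB.snd_mem_support_of_mem_edges heB)
        have hadj : G.Adj a b := pA.adj_of_mem_edges heA
        rcases ha with rfl | rfl <;> rcases hb with rfl | rfl
        · exact hadj.ne rfl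
        · exact hnadj hadj
        · exact hnadj hadj.symm
        · exact hadj.ne rfl
    · intro hnil
      have : (pA.append pB).length = 0 := by rw [hnil]; rfl
      rw [Walk.length_append] at this
      omega
  · rw [Walk.tail_support_append]
    rw [List.nodup_append]
    refine ⟨hA.support_nodup.sublist (List.tail_sublist _), 
      hB.support_nodup.sublist (List.tail_sublist _), ?_⟩
    intro a haA a' haB haa
    rw [← haa] at haB
    have h1 := hAB a (List.mem_of_mem_tail haA) (List.mem_of_mem_tail haB)
    rcases h1 with rfl | rfl
    · exact hxtail haA
    · exact hytail haB


end Cycle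

lemma isChordal_induce {V : Type*} (G : SimpleGraph V) (s : Set V) (h : IsChordal G) :
    IsChordal (G.induce s) := by
  intro v w hc hl
  set f := SimpleGraph.Embedding.induce (G := G) s with hf
  obtain ⟨a, b, ha, hb, hadj, hne⟩ := h _ (w.map f.toHom) (hc.map f.injective)
    (by rwa [Walk.length_map])
  rw [Walk.support_map, List.mem_map] at ha hb
  obtain ⟨a', ha', rfl⟩ := ha
  obtain ⟨b', hb', rfl⟩ := hb
  refine ⟨a', b', ha', hb', f.map_adj_iff.mp hadj, fun hmem => hne ?_⟩
  rw [Walk.edges_map]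
  exact List.mem_map_of_mem (f := Sym2.map f) hmem

section Sep

variable {V : Type*} [Fintype V] [DecidableEq V] {G : SimpleGraph V}

lemma sep_structure (hG : IsChordal G) {a b : V} (hab : a ≠ b) (hnadj : ¬ G.Adj a b) :
    ∃ (A : Set V) (S : Finset V), a ∈ A ∧ b ∉ A ∧ b ∉ S ∧ (∀ v ∈ A, v ∉ S) ∧
      (∀ u v, G.Adj u v → u ∈ A → v ∈ A ∨ v ∈ S) ∧
      (S : Set V).Pairwise G.Adj := by
  classical
  set SepP : Finset V → Prop := fun S => a ∉ S ∧ b ∉ S ∧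
    ∀ w : G.Walk a b, ∃ u ∈ w.support, u ∈ S with hSepP
  have h0 : SepP (Finset.univ \ {a, b}) := by
    refine ⟨by simp, by simp, fun w => ?_⟩
    by_contra hcon
    push_neg at hcon
    have hnd := w.toPath.2.support_nodup
    have hsub : ∀ u ∈ (w.toPath : G.Walk a b).support, u ∈ ({a, b} : Finset V) := by
      intro u hu
      have h' := hcon u (w.support_toPath_subset hu)
      simp only [Finset.mem_sdiff, Finset.mem_univ, true_and, not_not] at h'
      exact h'
    have hlen : 2 ≤ (w.toPath : G.Walk a b).length := by
      rcases Nat.lt_or_ge (w.toPath : G.Walk a b).length 2 with hlt | hge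
      · interval_cases h : (w.toPath : G.Walk a b).length
        · exact (hab (Walk.eq_of_length_eq_zero h)).elim
        · exact (hnadj ((w.toPath : G.Walk a b).adj_of_mem_edges (edge_mem_of_length_one h))).elim
      · exact hge
    have h1 : (w.toPath : G.Walk a b).support.toFinset.card =
        (w.toPath : G.Walk a b).support.length := List.toFinset_card_of_nodup hnd
    have h2 : (w.toPath : G.Walk a b).support.toFinset ⊆ {a, b} := fun u hu =>
      hsub u (List.mem_toFinset.mp hu)
    have h3 := Finset.card_le_card h2
    rw [h1, Walk.length_support] at h3
    have h4 : ({a, b} : Finset V).card ≤ 2 := Finset.card_insert_le _ _ |>.trans (by simp)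
    omega
  have hex : ∃ k, ∃ S, SepP S ∧ S.card = k := ⟨_, _, h0, rfl⟩
  obtain ⟨S, hS, hScard⟩ := Nat.find_spec hex
  have hmin : ∀ x ∈ S, ¬ SepP (S.erase x) := by
    intro x hx hcon
    have h1 : Nat.find hex ≤ (S.erase x).card := Nat.find_le ⟨_, hcon, rfl⟩
    rw [Finset.card_erase_of_mem hx] at h1
    have hpos : 0 < S.card := Finset.card_pos.mpr ⟨x, hx⟩
    omega
  -- Reachability avoiding S
  set A : Set V := {v | ∃ w : G.Walk a v, ∀ u ∈ w.support, u ∉ S} with hA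
  set B : Set V := {v | ∃ w : G.Walk b v, ∀ u ∈ w.support, u ∉ S} with hB
  have haA : a ∈ A := ⟨Walk.nil, by simpa using hS.1⟩
  have hbB : b ∈ B := ⟨Walk.nil, by simpa using hS.2.1⟩
  have hAS : ∀ v ∈ A, v ∉ S := fun v ⟨w, hw⟩ => hw v w.end_mem_support
  have hBS : ∀ v ∈ B, v ∉ S := fun v ⟨w, hw⟩ => hw v w.end_mem_support
  have hcloseA : ∀ u v, u ∈ A → G.Adj u v → v ∉ S → v ∈ A := by
    rintro u v ⟨w, hw⟩ hadj hvS
    refine ⟨w.concat hadj, fun z hz => ?_⟩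
    rw [Walk.support_concat, List.mem_append] at hz
    rcases hz with hz | hz
    · exact hw z hz
    · simp at hz; subst hz; exact hvS
  have hcloseB : ∀ u v, u ∈ B → G.Adj u v → v ∉ S → v ∈ B := by
    rintro u v ⟨w, hw⟩ hadj hvS
    refine ⟨w.concat hadj, fun z hz => ?_⟩
    rw [Walk.support_concat, List.mem_append] at hz
    rcases hz with hz | hz
    · exact hw z hz
    · simp at hz; subst hz; exact hvS
  have hedge : ∀ u v, G.Adj u v → u ∈ A → v ∈ A ∨ v ∈ S := by
    intro u v hadj hu
    by_cases hvS : v ∈ S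
    · exact Or.inr hvS
    · exact Or.inl (hcloseA u v hu hadj hvS)
  have hABdisj : ∀ v, v ∈ A → v ∈ B → False := by
    rintro v ⟨w1, hw1⟩ ⟨w2, hw2⟩
    obtain ⟨u, hu, huS⟩ := hS.2.2 (w1.append w2.reverse)
    rw [Walk.mem_support_append_iff] at hu
    rcases hu with hu | hu
    · exact hw1 u hu huS
    · rw [Walk.support_reverse, List.mem_reverse] at hu
      exact hw2 u hu huS
  have hbA : b ∉ A := fun h => hABdisj b h hbB
  -- every vertex on an S-avoiding walk from a is in A (resp. b, B)
  have hsubA : ∀ (v : V) (w : G.Walk a v), (∀ u ∈ w.support, u ∉ S) →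
      ∀ z ∈ w.support, z ∈ A := by
    intro v w hw z hz
    exact ⟨w.takeUntil z hz, fun u hu => hw u (w.support_takeUntil_subset hz hu)⟩
  have hsubB : ∀ (v : V) (w : G.Walk b v), (∀ u ∈ w.support, u ∉ S) →
      ∀ z ∈ w.support, z ∈ B := by
    intro v w hw z hz
    exact ⟨w.takeUntil z hz, fun u hu => hw u (w.support_takeUntil_subset hz hu)⟩
  -- attachment
  have attach : ∀ (C : Set V), (∀ u v : V, u ∈ C → G.Adj u v → v ∉ S → v ∈ C) →
      ∀ (x u : V) (t : G.Walk u x), u ∈ C →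
      (∀ z ∈ t.support, z = x ∨ z ∉ S) → (∃ v ∈ C, G.Adj v x) ∨ x ∈ C := by
    intro C hCclose x u t
    induction t with
    | nil => exact fun hu _ => Or.inr hu
    | @cons u d x hadj t' ih =>
      intro hu hsup
      by_cases hdx : d = x
      · subst hdx; exact Or.inl ⟨u, hu, hadj⟩
      · have hd : d ∉ S := by
          have := hsup d (by rw [Walk.support_cons]; exact List.mem_cons_of_mem _ t'.start_mem_support)
          tauto
        exact ih (hCclose u d hu hadj hd)
          (fun z hz => hsup z (by rw [Walk.support_cons]; exact List.mem_cons_of_mem _ hz))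
  have attach2 : ∀ x ∈ S, (∃ v ∈ A, G.Adj v x) ∧ (∃ v ∈ B, G.Adj v x) := by
    intro x hx
    have hfail := hmin x hx
    simp only [hSepP] at hfail
    push_neg at hfail
    have hae : a ∉ S.erase x := fun h => hS.1 (Finset.mem_of_mem_erase h)
    have hbe : b ∉ S.erase x := fun h => hS.2.1 (Finset.mem_of_mem_erase h)
    obtain ⟨w, hw⟩ := hfail hae hbe
    have hxw : x ∈ w.support := by
      obtain ⟨u, hu, huS⟩ := hS.2.2 w
      have := hw u hu
      rcases eq_or_ne u x with rfl | hne
      · exact hu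
      · exact absurd (Finset.mem_erase.mpr ⟨hne, huS⟩) this
    have hcond : ∀ z ∈ w.support, z = x ∨ z ∉ S := by
      intro z hz
      rcases eq_or_ne z x with rfl | hne
      · exact Or.inl rfl
      · exact Or.inr (fun hzS => hw z hz (Finset.mem_erase.mpr ⟨hne, hzS⟩))
    constructor
    · rcases attach A hcloseA x a (w.takeUntil x hxw) haA
        (fun z hz => hcond z (w.support_takeUntil_subset hxw hz)) with h | h
      · exact h
      · exact absurd hx (hAS x h)
    · rcases attach B hcloseB x b ((w.dropUntil x hxw).reverse) hbB
        (fun z hz => hcond z (w.support_dropUntil_subset hxw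
          (by rwa [Walk.support_reverse, List.mem_reverse] at hz))) with h | h
      · exact h
      · exact absurd hx (hBS x h)
  -- S is a clique
  have hclique : (S : Set V).Pairwise G.Adj := by
    intro x hx y hy hxy
    by_contra hnxy
    obtain ⟨⟨uA, huA, hadjA⟩, _⟩ := attach2 x hx
    obtain ⟨⟨uA', huA', hadjA'⟩, _⟩ := attach2 y hy
    obtain ⟨_, uB, huB, hadjB⟩ := attach2 x hx
    obtain ⟨_, uB', huB', hadjB'⟩ := attach2 y hy
    obtain ⟨w1, hw1⟩ := huA
    obtain ⟨w2, hw2⟩ := huA'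
    obtain ⟨w3, hw3⟩ := huB
    obtain ⟨w4, hw4⟩ := huB'
    have huA : uA ∈ A := ⟨w1, hw1⟩
    have huA' : uA' ∈ A := ⟨w2, hw2⟩
    have huB : uB ∈ B := ⟨w3, hw3⟩
    have huB' : uB' ∈ B := ⟨w4, hw4⟩
    have hqA : ∃ q : G.Walk x y, ∀ z ∈ q.support, z ∈ (insert x (insert y A) : Set V) := by
      refine ⟨Walk.cons hadjA.symm ((w1.reverse.append w2).concat hadjA'), ?_⟩
      intro z hz
      rw [Walk.support_cons, List.mem_cons] at hz
      rcases hz with rfl | hz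
      · exact Set.mem_insert _ _
      rw [Walk.support_concat, List.mem_append] at hz
      rcases hz with hz | hz
      · rw [Walk.mem_support_append_iff] at hz
        rcases hz with hz | hz
        · exact Set.mem_insert_of_mem _ (Set.mem_insert_of_mem _ (hsubA uA w1 hw1 z
            (by rwa [Walk.support_reverse, List.mem_reverse] at hz)))
        · exact Set.mem_insert_of_mem _ (Set.mem_insert_of_mem _ (hsubA uA' w2 hw2 z hz))
      · simp only [List.mem_singleton] at hz
        subst hz
        exact Set.mem_insert_of_mem _ (Set.mem_insert _ _)
    have hqB : ∃ q : G.Walk x y, ∀ z ∈ q.support, z ∈ (insert x (insert y B) : Set V) := by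
      refine ⟨Walk.cons hadjB.symm ((w3.reverse.append w4).concat hadjB'), ?_⟩
      intro z hz
      rw [Walk.support_cons, List.mem_cons] at hz
      rcases hz with rfl | hz
      · exact Set.mem_insert _ _
      rw [Walk.support_concat, List.mem_append] at hz
      rcases hz with hz | hz
      · rw [Walk.mem_support_append_iff] at hz
        rcases hz with hz | hz
        · exact Set.mem_insert_of_mem _ (Set.mem_insert_of_mem _ (hsubB uB w3 hw3 z
            (by rwa [Walk.support_reverse, List.mem_reverse] at hz)))
        · exact Set.mem_insert_of_mem _ (Set.mem_insert_of_mem _ (hsubB uB' w4 hw4 z hz))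
      · simp only [List.mem_singleton] at hz
        subst hz
        exact Set.mem_insert_of_mem _ (Set.mem_insert _ _)
    have hexA : ∃ k, ∃ q : G.Walk x y,
        (∀ z ∈ q.support, z ∈ (insert x (insert y A) : Set V)) ∧ q.length = k :=
      ⟨_, hqA.choose, hqA.choose_spec, rfl⟩
    have hexB : ∃ k, ∃ q : G.Walk x y,
        (∀ z ∈ q.support, z ∈ (insert x (insert y B) : Set V)) ∧ q.length = k :=
      ⟨_, hqB.choose, hqB.choose_spec, rfl⟩
    obtain ⟨qA, hqAsup, hqAlen⟩ := Nat.find_spec hexA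
    obtain ⟨qB, hqBsup, hqBlen⟩ := Nat.find_spec hexB
    set pA := qA.bypass with hpAdef
    set pB := qB.bypass with hpBdef
    have hpAsup : ∀ z ∈ pA.support, z ∈ (insert x (insert y A) : Set V) :=
      fun z hz => hqAsup z (qA.support_bypass_subset hz)
    have hpBsup : ∀ z ∈ pB.support, z ∈ (insert x (insert y B) : Set V) :=
      fun z hz => hqBsup z (qB.support_bypass_subset hz)
    have hpAmin : ∀ q : G.Walk x y, (∀ z ∈ q.support, z ∈ (insert x (insert y A) : Set V)) →
        pA.length ≤ q.length := by
      intro q hq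
      have h1 : Nat.find hexA ≤ q.length := Nat.find_le ⟨q, hq, rfl⟩
      have h2 : pA.length ≤ qA.length := qA.length_bypass_le
      omega
    have hpBmin : ∀ q : G.Walk x y, (∀ z ∈ q.support, z ∈ (insert x (insert y B) : Set V)) →
        pB.length ≤ q.length := by
      intro q hq
      have h1 : Nat.find hexB ≤ q.length := Nat.find_le ⟨q, hq, rfl⟩
      have h2 : pB.length ≤ qB.length := qB.length_bypass_le
      omega
    have hpApath : pA.IsPath := qA.bypass_isPath
    have hpBpath : pB.IsPath := qB.bypass_isPath
    have hlenA : 2 ≤ pA.length := by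
      rcases Nat.lt_or_ge pA.length 2 with hlt | hge
      · interval_cases h : pA.length
        · exact (hxy (Walk.eq_of_length_eq_zero h)).elim
        · exact (hnxy (pA.adj_of_mem_edges (edge_mem_of_length_one h))).elim
      · exact hge
    have hlenB : 2 ≤ pB.length := by
      rcases Nat.lt_or_ge pB.length 2 with hlt | hge
      · interval_cases h : pB.length
        · exact (hxy (Walk.eq_of_length_eq_zero h)).elim
        · exact (hnxy (pB.adj_of_mem_edges (edge_mem_of_length_one h))).elim
      · exact hge
    have hxA : x ∉ A := fun h => hAS x h hx
    have hyA : y ∉ A := fun h => hAS y h hy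
    have hxB : x ∉ B := fun h => hBS x h hx
    have hyB : y ∉ B := fun h => hBS y h hy
    have hcyc : (pA.append pB.reverse).IsCycle := by
      refine isCycle_append hpApath hpBpath.reverse hnxy hlenA ?_
      intro z hzA hzB
      rw [Walk.support_reverse, List.mem_reverse] at hzB
      have h1 := hpAsup z hzA
      have h2 := hpBsup z hzB
      simp only [Set.mem_insert_iff] at h1 h2
      rcases h1 with rfl | rfl | h1
      · exact Or.inl rfl
      · exact Or.inr rfl
      · rcases h2 with rfl | rfl | h2
        · exact absurd h1 hxA
        · exact absurd h1 hyA
        · exact (hABdisj z h1 h2).elim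
    have hlen4 : 4 ≤ (pA.append pB.reverse).length := by
      rw [Walk.length_append, Walk.length_reverse]
      omega
    obtain ⟨u, v, hu, hv, huv, hne⟩ := hG x _ hcyc hlen4
    have hedgesA : ∀ e ∈ pA.edges, e ∈ (pA.append pB.reverse).edges := by
      intro e he
      rw [Walk.edges_append]
      exact List.mem_append_left _ he
    have hedgesB : ∀ e ∈ pB.edges, e ∈ (pA.append pB.reverse).edges := by
      intro e he
      rw [Walk.edges_append]
      exact List.mem_append_right _ (by rwa [Walk.edges_reverse, List.mem_reverse])
    have shortA : u ∈ pA.support → v ∈ pA.support → False := fun h1 h2 =>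
      no_shortcut hpAmin hpAsup h1 h2 huv (fun hmem => hne (hedgesA _ hmem))
    have shortB : u ∈ pB.support → v ∈ pB.support → False := fun h1 h2 =>
      no_shortcut hpBmin hpBsup h1 h2 huv (fun hmem => hne (hedgesB _ hmem))
    have hsplit : ∀ z ∈ (pA.append pB.reverse).support,
        z ∈ pA.support ∨ z ∈ pB.support := by
      intro z hz
      rw [Walk.mem_support_append_iff] at hz
      rcases hz with hz | hz
      · exact Or.inl hz
      · right; rwa [Walk.support_reverse, List.mem_reverse] at hz
    have honlyA : ∀ z, z ∈ pA.support → z ∉ pB.support → z ∈ A := by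
      intro z h1 h2
      rcases Set.mem_insert_iff.mp (hpAsup z h1) with rfl | h3
      · exact absurd pB.start_mem_support h2
      · rcases Set.mem_insert_iff.mp h3 with rfl | h4
        · exact absurd pB.end_mem_support h2
        · exact h4
    have honlyB : ∀ z, z ∈ pB.support → z ∉ pA.support → z ∈ B := by
      intro z h1 h2
      rcases Set.mem_insert_iff.mp (hpBsup z h1) with rfl | h3
      · exact absurd pA.start_mem_support h2
      · rcases Set.mem_insert_iff.mp h3 with rfl | h4
        · exact absurd pA.end_mem_support h2
        · exact h4
    rcases hsplit u hu with hu1 | hu1 <;> rcases hsplit v hv with hv1 | hv1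
    · exact shortA hu1 hv1
    · by_cases h2 : v ∈ pA.support
      · exact shortA hu1 h2
      by_cases h3 : u ∈ pB.support
      · exact shortB h3 hv1
      have huA2 : u ∈ A := honlyA u hu1 h3
      have hvB2 : v ∈ B := honlyB v hv1 h2
      rcases hedge u v huv huA2 with h | h
      · exact hABdisj v h hvB2
      · exact hBS v hvB2 h
    · by_cases h2 : u ∈ pA.support
      · exact shortA h2 hv1
      by_cases h3 : v ∈ pB.support
      · exact shortB hu1 h3
      have hvA2 : v ∈ A := honlyA v hv1 h3
      have huB2 : u ∈ B := honlyB u hu1 h2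
      rcases hedge v u huv.symm hvA2 with h | h
      · exact hABdisj u h huB2
      · exact hBS u huB2 h
    · exact shortB hu1 hv1
  exact ⟨A, S, haA, hbA, hS.2.1, hAS, hedge, hclique⟩


end Sep

lemma induce_edgeSet_image {V : Type*} (G : SimpleGraph V) (W : Set V) :
    Sym2.map (Subtype.val) '' (G.induce W).edgeSet = {e ∈ G.edgeSet | ∀ v ∈ e, v ∈ W} := by
  ext e
  constructor
  · rintro ⟨e', he', rfl⟩
    induction e' with
    | h u v =>
      rw [mem_edgeSet] at he'
      simp only [comap_adj, Function.Embedding.coe_subtype] at he'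
      refine ⟨by rwa [Sym2.map_pair_eq, mem_edgeSet], ?_⟩
      intro z hz
      rw [Sym2.map_pair_eq, Sym2.mem_iff] at hz
      rcases hz with rfl | rfl
      · exact u.2
      · exact v.2
  · intro he
    obtain ⟨he1, he2⟩ := he
    induction e with
    | h u v =>
      have hu : u ∈ W := he2 u (Sym2.mem_mk_left u v)
      have hv : v ∈ W := he2 v (Sym2.mem_mk_right u v)
      refine ⟨s(⟨u, hu⟩, ⟨v, hv⟩), ?_, by rw [Sym2.map_pair_eq]⟩
      rw [mem_edgeSet]
      simp only [comap_adj, Function.Embedding.coe_subtype]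
      rwa [mem_edgeSet] at he1

lemma induce_edgeSet_ncard {V : Type*} (G : SimpleGraph V) (W : Set V) :
    (G.induce W).edgeSet.ncard = {e ∈ G.edgeSet | ∀ v ∈ e, v ∈ W}.ncard := by
  rw [← induce_edgeSet_image, Set.ncard_image_of_injective _ (Sym2.map.injective Subtype.val_injective)]


universe u

lemma bound : ∀ (n : ℕ) {V : Type u} [Fintype V] [DecidableEq V] (G : SimpleGraph V),
    Fintype.card V ≤ n → IsChordal G → G.CliqueFree 4 →
    G.edgeSet.ncard ≤ 2 * Fintype.card V - 3 := by
  intro n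
  induction n with
  | zero =>
    intro V _ _ G hcard _ _
    have : IsEmpty V := Fintype.card_eq_zero_iff.mp (Nat.le_zero.mp hcard)
    have he : G.edgeSet = ∅ := by
      ext e
      induction e with
      | h u v => exact (this.false u).elim
    simp [he]
  | succ n ih =>
    intro V _ _ G hcard hG hcf
    classical
    by_cases hcomp : ∀ u v : V, u ≠ v → G.Adj u v
    · have hc3 : Fintype.card V ≤ 3 := by
        by_contra h
        push_neg at h
        obtain ⟨t, -, ht⟩ := Finset.exists_subset_card_eq
          (show 4 ≤ (Finset.univ : Finset V).card by rwa [Finset.card_univ])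
        exact hcf t ⟨fun u _ v _ huv => hcomp u v huv, ht⟩
      have hle : G.edgeSet.ncard ≤ (Fintype.card V).choose 2 := by
        have h1 := G.card_edgeFinset_le_card_choose_two
        rwa [Set.ncard_eq_toFinset_card', ← edgeFinset]
      interval_cases h : Fintype.card V <;> simp_all [Nat.choose] <;> omega
    · push_neg at hcomp
      obtain ⟨a, b, hab, hnadj⟩ := hcomp
      obtain ⟨A, S, haA, hbA, hbS, hAS, hedge, hclique⟩ := sep_structure hG hab hnadj
      set V1 : Set V := A ∪ ↑S with hV1
      set V2 : Set V := Aᶜ with hV2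
      have hbV1 : b ∉ V1 := by
        rintro (h | h)
        · exact hbA h
        · exact hbS h
      have haV2 : a ∉ V2 := fun h => h haA
      have hn1 : Fintype.card ↥V1 < Fintype.card V := by
        refine Fintype.card_lt_of_injective_of_notMem _ Subtype.val_injective (b := b) ?_
        rintro ⟨⟨z, hz⟩, rfl⟩
        exact hbV1 hz
      have hn2 : Fintype.card ↥V2 < Fintype.card V := by
        refine Fintype.card_lt_of_injective_of_notMem _ Subtype.val_injective (b := a) ?_
        rintro ⟨⟨z, hz⟩, rfl⟩
        exact haV2 hz
      have hV1V2union : V1 ∪ V2 = Set.univ := by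
        ext z
        simp only [Set.mem_union, Set.mem_univ, iff_true, hV1, hV2, Set.mem_compl_iff]
        tauto
      have hV1V2inter : V1 ∩ V2 = ↑S := by
        ext z
        simp only [hV1, hV2, Set.mem_inter_iff, Set.mem_union, Set.mem_compl_iff,
          Finset.coe_sort_coe, Finset.mem_coe]
        constructor
        · rintro ⟨h1 | h1, h2⟩
          · exact absurd h1 h2
          · exact h1
        · intro h
          exact ⟨Or.inr h, fun hzA => hAS z hzA h⟩
      have hsumcard : Fintype.card ↥V1 + Fintype.card ↥V2 = Fintype.card V + S.card := by
        have h1 := Finset.card_union_add_card_inter V1.toFinset V2.toFinset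
        have e1 : V1.toFinset ∪ V2.toFinset = Finset.univ := by
          ext z
          have := Set.ext_iff.mp hV1V2union z
          simp only [Finset.mem_union, Set.mem_toFinset, Finset.mem_univ, iff_true]
          simpa [Set.mem_union] using this.mpr trivial
        have e2 : V1.toFinset ∩ V2.toFinset = S := by
          ext z
          have := Set.ext_iff.mp hV1V2inter z
          simp only [Finset.mem_inter, Set.mem_toFinset]
          simpa [Set.mem_inter_iff] using this
        rw [e1, e2, Finset.card_univ] at h1
        rw [Set.toFinset_card, Set.toFinset_card] at h1
        omega
      -- edge sets
      set E1 : Set (Sym2 V) := {e ∈ G.edgeSet | ∀ v ∈ e, v ∈ V1} with hE1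
      set E2 : Set (Sym2 V) := {e ∈ G.edgeSet | ∀ v ∈ e, v ∈ V2} with hE2
      have hEunion : E1 ∪ E2 = G.edgeSet := by
        ext e
        constructor
        · rintro (he | he) <;> exact he.1
        · intro he
          induction e with
          | h u v =>
            rw [mem_edgeSet] at he
            by_cases huA : u ∈ A
            · left
              refine ⟨by rwa [mem_edgeSet], ?_⟩
              intro z hz
              rw [Sym2.mem_iff] at hz
              rcases hz with rfl | rfl
              · exact Or.inl huA
              · rcases hedge u z he huA with h | h
                · exact Or.inl h
                · exact Or.inr h
            · by_cases hvA : v ∈ A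
              · left
                refine ⟨by rwa [mem_edgeSet], ?_⟩
                intro z hz
                rw [Sym2.mem_iff] at hz
                rcases hz with rfl | rfl
                · rcases hedge v z he.symm hvA with h | h
                  · exact Or.inl h
                  · exact Or.inr h
                · exact Or.inl hvA
              · right
                refine ⟨by rwa [mem_edgeSet], ?_⟩
                intro z hz
                rw [Sym2.mem_iff] at hz
                rcases hz with rfl | rfl
                · exact huA
                · exact hvA
      have hEinter : E1 ∩ E2 = {e ∈ G.edgeSet | ∀ v ∈ e, v ∈ (↑S : Set V)} := by
        ext e
        constructor
        · rintro ⟨⟨he, h1⟩, ⟨-, h2⟩⟩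
          refine ⟨he, fun z hz => ?_⟩
          have := Set.mem_inter (h1 z hz) (h2 z hz)
          rwa [hV1V2inter] at this
        · rintro ⟨he, h1⟩
          have hsub : (↑S : Set V) ⊆ V1 ∩ V2 := by rw [hV1V2inter]
          exact ⟨⟨he, fun z hz => (hsub (h1 z hz)).1⟩, ⟨he, fun z hz => (hsub (h1 z hz)).2⟩⟩
      have hncard : G.edgeSet.ncard + (E1 ∩ E2).ncard = E1.ncard + E2.ncard := by
        rw [← hEunion]
        exact Set.ncard_union_add_ncard_inter E1 E2 (Set.toFinite _) (Set.toFinite _)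
      -- apply induction hypothesis
      have hb1 : E1.ncard ≤ 2 * Fintype.card ↥V1 - 3 := by
        rw [← induce_edgeSet_ncard]
        exact ih (G.induce V1) (by omega) (isChordal_induce G V1 hG)
          (hcf.comap (Embedding.induce V1).isContained)
      have hb2 : E2.ncard ≤ 2 * Fintype.card ↥V2 - 3 := by
        rw [← induce_edgeSet_ncard]
        exact ih (G.induce V2) (by omega) (isChordal_induce G V2 hG)
          (hcf.comap (Embedding.induce V2).isContained)
      -- S has at most 3 elements
      have hS3 : S.card ≤ 3 := by
        by_contra h
        push_neg at h
        obtain ⟨t, hts, ht⟩ := Finset.exists_subset_card_eq (show 4 ≤ S.card by omega)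
        refine hcf t ⟨?_, ht⟩
        intro u hu v hv huv
        exact hclique (hts hu) (hts hv) huv
      -- lower bounds on the intersection
      have hI2 : S.card = 2 → 1 ≤ (E1 ∩ E2).ncard := by
        intro h2
        obtain ⟨x, y, hxy, rfl⟩ := Finset.card_eq_two.mp h2
        have hadj : G.Adj x y := hclique (by simp) (by simp) hxy
        have hmem : s(x, y) ∈ E1 ∩ E2 := by
          rw [hEinter]
          refine ⟨hadj, fun z hz => ?_⟩
          rw [Sym2.mem_iff] at hz
          rcases hz with rfl | rfl <;> simp
        have := Set.ncard_pos (Set.toFinite _) |>.mpr ⟨_, hmem⟩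
        omega
      have hI3 : S.card = 3 → 3 ≤ (E1 ∩ E2).ncard := by
        intro h3
        obtain ⟨x, y, z, hxy, hxz, hyz, rfl⟩ := Finset.card_eq_three.mp h3
        have hmem : ∀ u v : V, u ∈ ({x, y, z} : Finset V) → v ∈ ({x, y, z} : Finset V) →
            u ≠ v → s(u, v) ∈ E1 ∩ E2 := by
          intro u v hu hv huv
          rw [hEinter]
          refine ⟨hclique (by simpa using hu) (by simpa using hv) huv, fun w hw => ?_⟩
          rw [Sym2.mem_iff] at hw
          rcases hw with rfl | rfl <;> simpa using (by assumption : w ∈ ({x, y, z} : Finset V))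
        have hsub : ({s(x, y), s(x, z), s(y, z)} : Set (Sym2 V)) ⊆ E1 ∩ E2 := by
          rintro e (rfl | rfl | rfl)
          · exact hmem x y (by simp) (by simp) hxy
          · exact hmem x z (by simp) (by simp) hxz
          · exact hmem y z (by simp) (by simp) hyz
        have hcard3 : ({s(x, y), s(x, z), s(y, z)} : Set (Sym2 V)).ncard = 3 := by
          rw [Set.ncard_insert_of_notMem (by simp [Sym2.eq_iff]; tauto) (Set.toFinite _),
            Set.ncard_insert_of_notMem (by simp [Sym2.eq_iff]; tauto) (Set.toFinite _),
            Set.ncard_singleton]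
        calc 3 = ({s(x, y), s(x, z), s(y, z)} : Set (Sym2 V)).ncard := hcard3.symm
          _ ≤ (E1 ∩ E2).ncard := Set.ncard_le_ncard hsub (Set.toFinite _)
      have hScases : S.card = 0 ∨ S.card = 1 ∨ S.card = 2 ∨ S.card = 3 := by omega
      rcases hScases with h | h | h | h
      · omega
      · omega
      · have := hI2 h; omega
      · have := hI3 h; omega


end ChordalBoundAux

/-- The complete tripartite graph `K_{m,m,m}` (on `n = 3m` vertices, with `n²/3` edges)
has no chordal subgraph with more than `2n - 3` edges. -/
theorem tripartite_chordal_subgraph_bound (m : ℕ)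
    (H : (SimpleGraph.completeMultipartiteGraph (fun _ : Fin 3 => Fin m)).Subgraph)
    (hH : IsChordal H.coe) :
    H.edgeSet.ncard ≤ 2 * (3 * m) - 3 := by
  classical
  have hcf : H.coe.CliqueFree 4 := by
    intro t ht
    have hmap : ∀ x ∈ t, ((x : Σ _ : Fin 3, Fin m)).1 ∈ (Finset.univ : Finset (Fin 3)) :=
      fun _ _ => Finset.mem_univ _
    obtain ⟨x, hx, y, hy, hxy, hfst⟩ := Finset.exists_ne_map_eq_of_card_lt_of_maps_to
      (by rw [ht.2]; simp) hmap
    have hadj : H.coe.Adj x y := ht.1 hx hy hxy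
    have hadj2 := H.adj_sub ((SimpleGraph.Subgraph.coe_adj H x y) ▸ hadj)
    simp only [SimpleGraph.completeMultipartiteGraph, SimpleGraph.comap_adj, SimpleGraph.top_adj]
      at hadj2
    exact hadj2 hfst
  have hcard : Fintype.card ↥H.verts ≤ 3 * m := by
    have h2 : Fintype.card (Σ _ : Fin 3, Fin m) = 3 * m := by
      simp [Fintype.card_sigma]
    exact h2 ▸ Fintype.card_le_of_injective (Subtype.val : ↥H.verts → _) Subtype.val_injective
  have hbound := ChordalBoundAux.bound (Fintype.card ↥H.verts) H.coe le_rfl hH hcf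
  have himg : H.edgeSet.ncard = H.coe.edgeSet.ncard := by
    rw [← SimpleGraph.Subgraph.image_coe_edgeSet_coe,
      Set.ncard_image_of_injective _ (Sym2.map.injective Subtype.val_injective)]
  omega
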